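/- The evaluation-at-centers map ev₀ from the space of open rectilinear embeddings Rect(⊔_{i∈I} □^{p,R_i}, □^{p,q}) to the configuration space Conf_{R}(□^{p,q}) (configurations where the i-th point lies in the stratum □^{p,q}_{[R_i]}, all points pairwise distinct) admits a continuous section s with ev₀ ∘ s = id, and s ∘ ev₀ is homotopic to the identity; in particular ev₀ is a homotopy equivalence. -/

import Mathlib

open Set

/-- Points of `ℝ^{p+q} = ℝ^p × ℝ^q`. -/
abbrev Pt (p q : ℕ) := (Fin p → ℝ) × (Fin q → ℝ)

/-- The cube `□^{p,Q} = (-1,1)^p × ∏ δ_i` where `δ_i = [0,1)` for `i ∈ Q`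
and `δ_i = (-1,1)` otherwise. -/
def cube (p q : ℕ) (Q : Set (Fin q)) : Set (Pt p q) :=
  {x | (∀ i, x.1 i ∈ Ioo (-1 : ℝ) 1) ∧
    ∀ j, (j ∈ Q → x.2 j ∈ Ico (0 : ℝ) 1) ∧ (j ∉ Q → x.2 j ∈ Ioo (-1 : ℝ) 1)}

/-- A rectilinear map of `ℝ^{p+q}`: composition of a coordinatewise dilation with
positive factors and a translation. -/
def IsRectilinear (p q : ℕ) (f : Pt p q → Pt p q) : Prop :=
  ∃ (a b : Fin p → ℝ) (c e : Fin q → ℝ),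
    (∀ i, 0 < a i) ∧ (∀ j, 0 < c j) ∧
      ∀ x : Pt p q, f x = (fun i => a i * x.1 i + b i, fun j => c j * x.2 j + e j)

/-- An open rectilinear embedding `□^{p,Q'} ↪ □^{p,Q}`: the restriction of a rectilinear
map sending `□^{p,Q'}` into `□^{p,Q}`, whose image is open in `□^{p,Q}`
(rectilinear maps are automatically injective). -/
def OpenRectEmb (p q : ℕ) (f : Pt p q → Pt p q) (Q' Q : Set (Fin q)) : Prop :=
  IsRectilinear p q f ∧ f '' cube p q Q' ⊆ cube p q Q ∧
    ∃ O : Set (Pt p q), IsOpen O ∧ f '' cube p q Q' = O ∩ cube p q Q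

/-- The deepest stratum `□^{p,Q}_{[Q]}` of `□^{p,Q}`: the points whose coordinates
indexed by `Q` all vanish. -/
def deepStratum (p q : ℕ) (Q : Set (Fin q)) : Set (Pt p q) :=
  {x ∈ cube p q Q | ∀ j ∈ Q, x.2 j = 0}

/-- The configuration space `Conf_R(□^{p,q})`: tuples of pairwise distinct points with
`x i` in the stratum of `□^{p,q}` where exactly the coordinates indexed by `R i`
(among the last `q`) vanish. -/
def ConfSet (p q : ℕ) (ι : Type) (R : ι → Set (Fin q)) : Set (ι → Pt p q) :=
  {x | (∀ i, x i ∈ cube p q Set.univ ∧ ∀ j, ((x i).2 j = 0 ↔ j ∈ R i)) ∧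
    Function.Injective x}

/-- The space `Rect(⊔_i □^{p,R_i}, □^{p,q})` of tuples of open rectilinear embeddings
`ι_i : □^{p,R_i} ↪ □^{p,q}` that are jointly injective, with the compact-open topology. -/
abbrev RectSpace (p q : ℕ) (ι : Type) (R : ι → Set (Fin q)) : Type :=
  {f : ι → C(Pt p q, Pt p q) //
    (∀ i, OpenRectEmb p q (f i) (R i) Set.univ) ∧
    ∀ (i j : ι) (x y : Pt p q), x ∈ cube p q (R i) → y ∈ cube p q (R j) →
      f i x = f j y → i = j ∧ x = y}

namespace EvAux

variable {p q : ℕ}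

/-- The coordinatewise affine map with dilation factors `s, s'` and center `z`. -/
def aff (s : Fin p → ℝ) (s' : Fin q → ℝ) (z : Pt p q) (x : Pt p q) : Pt p q :=
  (fun k => s k * x.1 k + z.1 k, fun j => s' j * x.2 j + z.2 j)

lemma continuous_aff (s : Fin p → ℝ) (s' : Fin q → ℝ) (z : Pt p q) :
    Continuous (aff s s' z) := by
  refine Continuous.prodMk ?_ ?_ <;> exact continuous_pi fun k => by fun_prop

lemma zero_mem_cube (Q : Set (Fin q)) : (0 : Pt p q) ∈ cube p q Q := by
  refine ⟨fun i => ?_, fun j => ⟨fun _ => ?_, fun _ => ?_⟩⟩ <;>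
    simp [Prod.fst_zero, Prod.snd_zero] <;> norm_num

lemma aff_zero (s : Fin p → ℝ) (s' : Fin q → ℝ) (z : Pt p q) :
    aff s s' z 0 = z := by
  simp [aff]

lemma aff_inj {s : Fin p → ℝ} {s' : Fin q → ℝ} {z : Pt p q}
    (hs : ∀ k, 0 < s k) (hs' : ∀ j, 0 < s' j) {x y : Pt p q}
    (h : aff s s' z x = aff s s' z y) : x = y := by
  have h1 := congrArg Prod.fst h
  have h2 := congrArg Prod.snd h
  refine Prod.ext (funext fun k => ?_) (funext fun j => ?_)
  · have := congrFun h1 k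
    simp only [aff] at this
    exact mul_left_cancel₀ (hs k).ne' (by linarith)
  · have := congrFun h2 j
    simp only [aff] at this
    exact mul_left_cancel₀ (hs' j).ne' (by linarith)

lemma aff_image (Q : Set (Fin q)) {s : Fin p → ℝ} {s' : Fin q → ℝ} {z : Pt p q}
    (hs : ∀ k, 0 < s k) (hs' : ∀ j, 0 < s' j)
    (hz : z ∈ cube p q univ) (hzQ : ∀ j, z.2 j = 0 ↔ j ∈ Q)
    (h1 : ∀ k, s k ≤ 1 - |z.1 k|)
    (h2 : ∀ j, j ∈ Q → s' j ≤ 1)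
    (h3 : ∀ j, j ∉ Q → s' j ≤ z.2 j ∧ s' j + z.2 j ≤ 1) :
    aff s s' z '' cube p q Q =
      {y : Pt p q | (∀ k, |y.1 k - z.1 k| < s k) ∧ ∀ j, |y.2 j - z.2 j| < s' j}
        ∩ cube p q univ := by
  ext y
  constructor
  · rintro ⟨x, hx, rfl⟩
    have hx1 : ∀ k, |x.1 k| < 1 := fun k => abs_lt.2 ⟨(hx.1 k).1, (hx.1 k).2⟩
    have hx2 : ∀ j, |x.2 j| < 1 := by
      intro j
      by_cases hj : j ∈ Q
      · have := (hx.2 j).1 hj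
        exact abs_lt.2 ⟨by linarith [this.1], this.2⟩
      · exact abs_lt.2 ⟨((hx.2 j).2 hj).1, ((hx.2 j).2 hj).2⟩
    have hz1 : ∀ k, |z.1 k| < 1 := fun k => abs_lt.2 ⟨(hz.1 k).1, (hz.1 k).2⟩
    have hz2 : ∀ j, 0 ≤ z.2 j ∧ z.2 j < 1 := fun j => (hz.2 j).1 (mem_univ j)
    refine ⟨⟨fun k => ?_, fun j => ?_⟩, ⟨fun k => ?_, fun j => ⟨fun _ => ?_, fun hj => absurd (mem_univ j) hj⟩⟩⟩
    · show |s k * x.1 k + z.1 k - z.1 k| < s k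
      rw [add_sub_cancel_right, abs_mul, abs_of_pos (hs k)]
      calc s k * |x.1 k| < s k * 1 := by
            exact (mul_lt_mul_iff_right₀ (hs k)).2 (hx1 k)
        _ = s k := mul_one _
    · show |s' j * x.2 j + z.2 j - z.2 j| < s' j
      rw [add_sub_cancel_right, abs_mul, abs_of_pos (hs' j)]
      calc s' j * |x.2 j| < s' j * 1 := (mul_lt_mul_iff_right₀ (hs' j)).2 (hx2 j)
        _ = s' j := mul_one _
    · show s k * x.1 k + z.1 k ∈ Ioo (-1 : ℝ) 1
      have : |s k * x.1 k + z.1 k| < 1 := by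
        calc |s k * x.1 k + z.1 k| ≤ |s k * x.1 k| + |z.1 k| := abs_add_le _ _
          _ < s k + |z.1 k| := by
              rw [abs_mul, abs_of_pos (hs k)]
              have := (mul_lt_mul_iff_right₀ (hs k)).2 (hx1 k)
              linarith [this]
          _ ≤ 1 := by linarith [h1 k]
      exact abs_lt.1 this
    · show s' j * x.2 j + z.2 j ∈ Ico (0 : ℝ) 1
      by_cases hj : j ∈ Q
      · have hzj : z.2 j = 0 := (hzQ j).2 hj
        have hxj := (hx.2 j).1 hj
        rw [hzj, add_zero]
        constructor
        · exact mul_nonneg (hs' j).le hxj.1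
        · calc s' j * x.2 j < s' j * 1 := (mul_lt_mul_iff_right₀ (hs' j)).2 hxj.2
            _ ≤ 1 := by linarith [h2 j hj]
      · have hxj := (hx.2 j).2 hj
        have h3j := h3 j hj
        constructor
        · nlinarith [hxj.1, (hs' j), h3j.1]
        · nlinarith [hxj.2, (hs' j), h3j.2]
  · rintro ⟨⟨hy1, hy2⟩, hycube⟩
    refine ⟨(fun k => (y.1 k - z.1 k) / s k, fun j => (y.2 j - z.2 j) / s' j), ?_, ?_⟩
    · refine ⟨fun k => ?_, fun j => ⟨fun hj => ?_, fun hj => ?_⟩⟩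
      · have : |(y.1 k - z.1 k) / s k| < 1 := by
          rw [abs_div, abs_of_pos (hs k), div_lt_one (hs k)]
          exact hy1 k
        exact abs_lt.1 this
      · have hzj : z.2 j = 0 := (hzQ j).2 hj
        have hy0 : 0 ≤ y.2 j ∧ y.2 j < 1 := (hycube.2 j).1 (mem_univ j)
        show (y.2 j - z.2 j) / s' j ∈ Ico (0:ℝ) 1
        rw [hzj, sub_zero]
        constructor
        · exact div_nonneg hy0.1 (hs' j).le
        · rw [div_lt_one (hs' j)]
          have := hy2 j
          rw [hzj, sub_zero] at this
          calc y.2 j ≤ |y.2 j| := le_abs_self _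
            _ < s' j := this
      · have : |(y.2 j - z.2 j) / s' j| < 1 := by
          rw [abs_div, abs_of_pos (hs' j), div_lt_one (hs' j)]
          exact hy2 j
        exact abs_lt.1 this
    · refine Prod.ext (funext fun k => ?_) (funext fun j => ?_)
      · show s k * ((y.1 k - z.1 k) / s k) + z.1 k = y.1 k
        rw [mul_div_cancel₀ _ (hs k).ne']; ring
      · show s' j * ((y.2 j - z.2 j) / s' j) + z.2 j = y.2 j
        rw [mul_div_cancel₀ _ (hs' j).ne']; ring

lemma isOpen_box (s : Fin p → ℝ) (s' : Fin q → ℝ) (z : Pt p q) :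
    IsOpen {y : Pt p q | (∀ k, |y.1 k - z.1 k| < s k) ∧ ∀ j, |y.2 j - z.2 j| < s' j} := by
  have : {y : Pt p q | (∀ k, |y.1 k - z.1 k| < s k) ∧ ∀ j, |y.2 j - z.2 j| < s' j}
      = (⋂ k, {y : Pt p q | |y.1 k - z.1 k| < s k}) ∩ ⋂ j, {y : Pt p q | |y.2 j - z.2 j| < s' j} := by
    ext y; simp [Set.mem_iInter]
  rw [this]
  refine IsOpen.inter ?_ ?_ <;> refine isOpen_iInter_of_finite fun k => ?_ <;>
    exact isOpen_lt (by fun_prop) continuous_const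

lemma openRectEmb_aff (Q : Set (Fin q)) {s : Fin p → ℝ} {s' : Fin q → ℝ} {z : Pt p q}
    (hs : ∀ k, 0 < s k) (hs' : ∀ j, 0 < s' j)
    (hz : z ∈ cube p q univ) (hzQ : ∀ j, z.2 j = 0 ↔ j ∈ Q)
    (h1 : ∀ k, s k ≤ 1 - |z.1 k|)
    (h2 : ∀ j, j ∈ Q → s' j ≤ 1)
    (h3 : ∀ j, j ∉ Q → s' j ≤ z.2 j ∧ s' j + z.2 j ≤ 1) :
    OpenRectEmb p q (aff s s' z) Q univ := by
  refine ⟨⟨s, z.1, s', z.2, hs, hs', fun x => rfl⟩, ?_, ?_⟩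
  · rw [aff_image Q hs hs' hz hzQ h1 h2 h3]; exact inter_subset_right
  · exact ⟨_, isOpen_box s s' z, aff_image Q hs hs' hz hzQ h1 h2 h3⟩

variable {ι : Type} [Fintype ι] {R : ι → Set (Fin q)}

def onep : Pt p q := (fun _ => 1, fun _ => 1)

noncomputable def Af (f : RectSpace p q ι R) (i : ι) (k : Fin p) : ℝ :=
  (f.1 i onep).1 k - (f.1 i 0).1 k

noncomputable def Cf (f : RectSpace p q ι R) (i : ι) (j : Fin q) : ℝ :=
  (f.1 i onep).2 j - (f.1 i 0).2 j

def cfg (f : RectSpace p q ι R) : ι → Pt p q := fun i => f.1 i 0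

lemma params (f : RectSpace p q ι R) (i : ι) :
    (∀ k, 0 < Af f i k) ∧ (∀ j, 0 < Cf f i j) ∧
      ∀ x, f.1 i x = aff (Af f i) (Cf f i) (cfg f i) x := by
  obtain ⟨a, b, c, e, ha, hc, hx⟩ := (f.2.1 i).1
  have hA : ∀ k, Af f i k = a k := by
    intro k; unfold Af onep; rw [hx, hx]; simp
  have hC : ∀ j, Cf f i j = c j := by
    intro j; unfold Cf onep; rw [hx, hx]; simp
  have hz1 : ∀ k, (cfg f i).1 k = b k := by intro k; unfold cfg; rw [hx]; simp
  have hz2 : ∀ j, (cfg f i).2 j = e j := by intro j; unfold cfg; rw [hx]; simp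
  refine ⟨fun k => (hA k) ▸ ha k, fun j => (hC j) ▸ hc j, fun x => ?_⟩
  rw [hx]
  unfold aff
  refine Prod.ext (funext fun k => ?_) (funext fun j => ?_) <;> simp [hA, hC, hz1, hz2]

/-- test point varying one of the first `p` coordinates -/
def ptk (k : Fin p) (t : ℝ) : Pt p q := (fun k' => if k' = k then t else 0, 0)

/-- test point varying one of the last `q` coordinates -/
def ptj (j : Fin q) (t : ℝ) : Pt p q := (0, fun j' => if j' = j then t else 0)

lemma ptk_mem (Q : Set (Fin q)) (k : Fin p) {t : ℝ} (ht : t ∈ Ioo (-1 : ℝ) 1) :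
    ptk k t ∈ cube p q Q := by
  refine ⟨fun k' => ?_, fun j => ⟨fun _ => ?_, fun _ => ?_⟩⟩
  · by_cases h : k' = k
    · simpa [ptk, h] using ht
    · simp only [ptk, if_neg h]; constructor <;> norm_num
  · simp only [ptk]; constructor <;> norm_num
  · simp only [ptk]; constructor <;> norm_num

lemma ptj_mem (Q : Set (Fin q)) (j : Fin q) {t : ℝ}
    (h1 : j ∈ Q → t ∈ Ico (0 : ℝ) 1) (h2 : j ∉ Q → t ∈ Ioo (-1 : ℝ) 1) :
    ptj j t ∈ cube p q Q := by
  refine ⟨fun k => ?_, fun j' => ⟨fun hj' => ?_, fun hj' => ?_⟩⟩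
  · simp only [ptj, Prod.fst]; constructor <;> norm_num
  · by_cases h : j' = j
    · subst h; simpa [ptj] using h1 hj'
    · simp [ptj, h]
  · by_cases h : j' = j
    · subst h; simpa [ptj] using h2 hj'
    · simp [ptj, h]

lemma aff_ptk (a : Fin p → ℝ) (c : Fin q → ℝ) (z : Pt p q) (k : Fin p) (t : ℝ) :
    (aff a c z (ptk k t)).1 k = a k * t + z.1 k := by simp [aff, ptk]

lemma aff_ptj (a : Fin p → ℝ) (c : Fin q → ℝ) (z : Pt p q) (j : Fin q) (t : ℝ) :
    (aff a c z (ptj j t)).2 j = c j * t + z.2 j := by simp [aff, ptj]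

lemma param_bounds (f : RectSpace p q ι R) (i : ι) :
    cfg f i ∈ cube p q univ ∧
    (∀ j, (cfg f i).2 j = 0 ↔ j ∈ R i) ∧
    (∀ k, Af f i k ≤ 1 - |(cfg f i).1 k|) ∧
    (∀ j, j ∈ R i → Cf f i j ≤ 1) ∧
    (∀ j, j ∉ R i → Cf f i j ≤ (cfg f i).2 j ∧ Cf f i j + (cfg f i).2 j ≤ 1) := by
  obtain ⟨hpa, hpc, heq⟩ := params f i
  set a := Af f i with hadef
  set c := Cf f i with hcdef
  set z := cfg f i with hzdef
  have hsub : ∀ x ∈ cube p q (R i), aff a c z x ∈ cube p q univ := by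
    intro x hx
    rw [← heq]
    exact (f.2.1 i).2.1 ⟨x, hx, rfl⟩
  have hzmem : z ∈ cube p q univ := by
    have := hsub 0 (zero_mem_cube _)
    rwa [aff_zero] at this
  have hz1 : ∀ k, (-1 : ℝ) < z.1 k ∧ z.1 k < 1 := fun k => ⟨(hzmem.1 k).1, (hzmem.1 k).2⟩
  have hz2 : ∀ j, (0 : ℝ) ≤ z.2 j ∧ z.2 j < 1 := fun j => (hzmem.2 j).1 (mem_univ j)
  -- bound on first-coordinate dilation factors
  have hA : ∀ k, Af f i k ≤ 1 - |z.1 k| := by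
    intro k
    have hup : a k + z.1 k ≤ 1 := by
      by_contra h
      push_neg at h
      have ht : (1 - z.1 k) / a k ∈ Ioo (-1 : ℝ) 1 := by
        constructor
        · have : 0 < (1 - z.1 k) / a k := div_pos (by linarith [(hz1 k).2]) (hpa k)
          linarith
        · rw [div_lt_one (hpa k)]; linarith
      have := (hsub (ptk k _) (ptk_mem (R i) k ht)).1 k
      have hval : (aff a c z (ptk k ((1 - z.1 k) / a k))).1 k = 1 := by
        rw [aff_ptk, mul_div_cancel₀ _ (hpa k).ne']; ring
      rw [hval] at this
      exact absurd this.2 (lt_irrefl 1)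
    have hlo : -1 ≤ z.1 k - a k := by
      by_contra h
      push_neg at h
      have ht : (-1 - z.1 k) / a k ∈ Ioo (-1 : ℝ) 1 := by
        constructor
        · rw [lt_div_iff₀ (hpa k)]; linarith
        · have : (-1 - z.1 k) / a k < 0 :=
            div_neg_of_neg_of_pos (by linarith [(hz1 k).1]) (hpa k)
          linarith
      have := (hsub (ptk k _) (ptk_mem (R i) k ht)).1 k
      have hval : (aff a c z (ptk k ((-1 - z.1 k) / a k))).1 k = -1 := by
        rw [aff_ptk, mul_div_cancel₀ _ (hpa k).ne']; ring
      rw [hval] at this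
      exact absurd this.1 (lt_irrefl (-1))
    rw [← hadef]
    rcases abs_cases (z.1 k) with ⟨habs, _⟩ | ⟨habs, _⟩ <;> rw [habs] <;> linarith
  -- first half of the bound for `j ∉ R i`
  have hC2a : ∀ j, j ∉ R i → c j ≤ z.2 j := by
    intro j hj
    by_contra h
    push_neg at h
    have ht : -(z.2 j + c j) / (2 * c j) ∈ Ioo (-1 : ℝ) 1 := by
      constructor
      · rw [lt_div_iff₀ (by linarith [hpc j])]; nlinarith [(hz2 j).1, hpc j]
      · have : -(z.2 j + c j) / (2 * c j) < 0 :=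
          div_neg_of_neg_of_pos (by nlinarith [(hz2 j).1, hpc j]) (by linarith [hpc j])
        linarith
    have hmem := hsub (ptj j _) (ptj_mem (R i) j (fun hq => absurd hq hj) (fun _ => ht))
    have := (hmem.2 j).1 (mem_univ j)
    have hval : (aff a c z (ptj j (-(z.2 j + c j) / (2 * c j)))).2 j = (z.2 j - c j) / 2 := by
      have hcne : c j ≠ 0 := (hpc j).ne'
      rw [aff_ptj]
      field_simp
      ring
    rw [hval] at this
    have : (0 : ℝ) ≤ (z.2 j - c j) / 2 := this.1
    linarith
  have hC2b : ∀ j, j ∉ R i → c j + z.2 j ≤ 1 := by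
    intro j hj
    by_contra h
    push_neg at h
    have ht : (1 - z.2 j) / c j ∈ Ioo (-1 : ℝ) 1 := by
      constructor
      · have : 0 < (1 - z.2 j) / c j := div_pos (by linarith [(hz2 j).2]) (hpc j)
        linarith
      · rw [div_lt_one (hpc j)]; linarith
    have hmem := hsub (ptj j _) (ptj_mem (R i) j (fun hq => absurd hq hj) (fun _ => ht))
    have := (hmem.2 j).1 (mem_univ j)
    have hval : (aff a c z (ptj j ((1 - z.2 j) / c j))).2 j = 1 := by
      rw [aff_ptj, mul_div_cancel₀ _ (hpc j).ne']; ring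
    rw [hval] at this
    exact absurd this.2 (lt_irrefl 1)
  -- the center lies in the correct stratum
  have hE : ∀ j, z.2 j = 0 ↔ j ∈ R i := by
    intro j
    constructor
    · intro h0
      by_contra hj
      have h1 := hC2a j hj
      have h2 := hpc j
      rw [h0] at h1
      linarith
    · intro hj
      by_contra hne
      have hpos : 0 < z.2 j := lt_of_le_of_ne (hz2 j).1 (Ne.symm hne)
      obtain ⟨O, hO, hIm⟩ := (f.2.1 i).2.2
      have hzim : z ∈ O ∩ cube p q univ := by
        rw [← hIm]
        exact ⟨0, zero_mem_cube _, by rw [heq, aff_zero]⟩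
      obtain ⟨r, hr, hball⟩ := Metric.isOpen_iff.1 hO z hzim.1
      set δ := min (z.2 j) r / 2 with hδdef
      have hδpos : 0 < δ := by positivity
      have hδz : δ ≤ z.2 j / 2 := by
        apply div_le_div_of_nonneg_right ?_ ?_ <;> [exact min_le_left _ _; norm_num]
      have hδr : δ < r := by
        have : δ ≤ r / 2 := by
          apply div_le_div_of_nonneg_right ?_ ?_ <;> [exact min_le_right _ _; norm_num]
        linarith
      set y : Pt p q := (z.1, Function.update z.2 j (z.2 j - δ)) with hydef
      have hyz : dist y z < r := by
        rw [Prod.dist_eq]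
        apply max_lt
        · simpa [hydef] using hr
        · rw [dist_pi_lt_iff hr]
          intro j'
          by_cases hj' : j' = j
          · subst hj'
            simp only [hydef, Function.update_self, Real.dist_eq]
            rw [show z.2 j' - δ - z.2 j' = -δ by ring, abs_neg, abs_of_pos hδpos]
            exact hδr
          · simp [hydef, Function.update_of_ne hj', hr]
      have hycube : y ∈ cube p q univ := by
        refine ⟨fun k => hzmem.1 k, fun j' => ⟨fun _ => ?_, fun h => absurd (mem_univ j') h⟩⟩
        by_cases hj' : j' = j
        · subst hj'
          simp only [hydef, Function.update_self]
          constructor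
          · linarith
          · linarith [(hz2 j').2]
        · simp only [hydef, Function.update_of_ne hj']
          exact (hzmem.2 j').1 (mem_univ j')
      have hyim : y ∈ f.1 i '' cube p q (R i) := by
        rw [hIm]
        exact ⟨hball (Metric.mem_ball.2 hyz), hycube⟩
      obtain ⟨x, hx, hxy⟩ := hyim
      rw [heq] at hxy
      have := congrFun (congrArg Prod.snd hxy) j
      simp only [hydef, aff, Function.update_self] at this
      have hx0 : 0 ≤ x.2 j := ((hx.2 j).1 hj).1
      nlinarith [hpc j, mul_nonneg (hpc j).le hx0]
  have hC1 : ∀ j, j ∈ R i → c j ≤ 1 := by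
    intro j hj
    by_contra h
    push_neg at h
    have hz0 : z.2 j = 0 := (hE j).2 hj
    have ht : 1 / c j ∈ Ico (0 : ℝ) 1 := by
      constructor
      · positivity
      · rw [div_lt_one (hpc j)]; linarith
    have hmem := hsub (ptj j _) (ptj_mem (R i) j (fun _ => ht)
      (fun hq => absurd hj hq))
    have := (hmem.2 j).1 (mem_univ j)
    have hval : (aff a c z (ptj j (1 / c j))).2 j = 1 := by
      rw [aff_ptj, hz0, mul_one_div, div_self (hpc j).ne']; ring
    rw [hval] at this
    exact absurd this.2 (lt_irrefl 1)
  exact ⟨hzmem, hE, hA, hC1, fun j hj => ⟨hC2a j hj, hC2b j hj⟩⟩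

lemma cfg_mem (f : RectSpace p q ι R) : cfg f ∈ ConfSet p q ι R :=
  ⟨fun i => ⟨(param_bounds f i).1, (param_bounds f i).2.1⟩,
   fun i i' h => (f.2.2 i i' 0 0 (zero_mem_cube _) (zero_mem_cube _) h).1⟩

lemma cube_abs_lt {Q : Set (Fin q)} {x : Pt p q} (hx : x ∈ cube p q Q) :
    (∀ k, |x.1 k| < 1) ∧ (∀ j, |x.2 j| < 1) := by
  constructor
  · exact fun k => abs_lt.2 ⟨(hx.1 k).1, (hx.1 k).2⟩
  · intro j
    by_cases hj : j ∈ Q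
    · have := (hx.2 j).1 hj
      exact abs_lt.2 ⟨by linarith [this.1], this.2⟩
    · exact abs_lt.2 ⟨((hx.2 j).2 hj).1, ((hx.2 j).2 hj).2⟩

/-- the index type for the finitely many quantities controlling the allowed scale -/
abbrev Gam (p q : ℕ) (ι : Type) : Type := (ι × Fin p) ⊕ ((ι × Fin q) ⊕ (ι × ι))

open Classical in
/-- the quantities controlling the allowed scale of embeddings around a configuration -/
noncomputable def phi (Rr : ι → Set (Fin q)) (c : ι → Pt p q) : Gam p q ι → ℝ := fun g =>
  match g with
  | .inl (i, k) => 1 - |(c i).1 k|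
  | .inr (.inl (i, j)) =>
      if j ∈ Rr i then 1 - (c i).2 j else min ((c i).2 j) (1 - (c i).2 j)
  | .inr (.inr (i, i')) => if i = i' then 1 else dist (c i) (c i')

/-- a continuous positive scale, small enough at every configuration -/
noncomputable def eps (Rr : ι → Set (Fin q)) (c : ι → Pt p q) : ℝ :=
  (1 / 2) * ∏ g : Gam p q ι, min 1 (phi Rr c g)

lemma phi_pos {Rr : ι → Set (Fin q)} {c : ι → Pt p q} (hc : c ∈ ConfSet p q ι Rr)
    (g : Gam p q ι) : 0 < phi Rr c g := by
  rcases g with ⟨i, k⟩ | ⟨⟨i, j⟩ | ⟨i, i'⟩⟩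
  · have := (cube_abs_lt (hc.1 i).1).1 k
    simp only [phi]
    linarith
  · simp only [phi]
    have hcu := ((hc.1 i).1.2 j).1 (mem_univ j)
    by_cases hj : j ∈ Rr i
    · rw [if_pos hj]; linarith [hcu.2]
    · rw [if_neg hj]
      have hne : (c i).2 j ≠ 0 := fun h0 => hj (((hc.1 i).2 j).1 h0)
      have : 0 < (c i).2 j := lt_of_le_of_ne hcu.1 (Ne.symm hne)
      exact lt_min this (by linarith [hcu.2])
  · simp only [phi]
    by_cases hii : i = i'
    · rw [if_pos hii]; norm_num
    · rw [if_neg hii]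
      exact dist_pos.2 fun h => hii (hc.2 h)

lemma eps_pos {Rr : ι → Set (Fin q)} {c : ι → Pt p q} (hc : c ∈ ConfSet p q ι Rr) :
    0 < eps Rr c := by
  unfold eps
  have : 0 < ∏ g : Gam p q ι, min 1 (phi Rr c g) :=
    Finset.prod_pos fun g _ => lt_min one_pos (phi_pos hc g)
  linarith

lemma two_eps_le_phi {Rr : ι → Set (Fin q)} {c : ι → Pt p q} (hc : c ∈ ConfSet p q ι Rr)
    (g : Gam p q ι) : 2 * eps Rr c ≤ phi Rr c g := by
  classical
  have key : ∏ g' : Gam p q ι, min 1 (phi Rr c g') ≤ min 1 (phi Rr c g) := by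
    rw [← Finset.mul_prod_erase Finset.univ _ (Finset.mem_univ g)]
    have h1 : ∏ g' ∈ Finset.univ.erase g, min 1 (phi Rr c g') ≤ 1 :=
      Finset.prod_le_one (fun g' _ => le_min one_pos.le (phi_pos hc g').le)
        (fun g' _ => min_le_left _ _)
    nlinarith [lt_min one_pos (phi_pos hc g),
      Finset.prod_nonneg (fun g' (_ : g' ∈ Finset.univ.erase g) =>
        le_min one_pos.le (phi_pos hc g').le)]
  have h2 : 2 * eps Rr c = ∏ g' : Gam p q ι, min 1 (phi Rr c g') := by unfold eps; ring
  rw [h2]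
  exact key.trans (min_le_right _ _)

lemma eps_le_phi {Rr : ι → Set (Fin q)} {c : ι → Pt p q} (hc : c ∈ ConfSet p q ι Rr)
    (g : Gam p q ι) : eps Rr c ≤ phi Rr c g := by
  have h1 := two_eps_le_phi hc g
  have h2 := eps_pos hc
  linarith

lemma eps_le_one {Rr : ι → Set (Fin q)} {c : ι → Pt p q} (hc : c ∈ ConfSet p q ι Rr) :
    eps Rr c ≤ 1 := by
  have h1 : ∏ g : Gam p q ι, min 1 (phi Rr c g) ≤ 1 :=
    Finset.prod_le_one (fun g _ => le_min one_pos.le (phi_pos hc g).le)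
      (fun g _ => min_le_left _ _)
  have h2 := eps_pos hc
  unfold eps at *
  linarith

lemma continuous_eps (Rr : ι → Set (Fin q)) :
    Continuous fun c : ι → Pt p q => eps Rr c := by
  unfold eps
  refine continuous_const.mul (continuous_finset_prod _ fun g _ => continuous_const.min ?_)
  rcases g with ⟨i, k⟩ | ⟨⟨i, j⟩ | ⟨i, i'⟩⟩ <;> simp only [phi]
  · exact continuous_const.sub ((continuous_apply k).comp (continuous_apply i).fst).abs
  · by_cases hj : j ∈ Rr i
    · simp only [if_pos hj]
      exact continuous_const.sub ((continuous_apply j).comp (continuous_apply i).snd)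
    · simp only [if_neg hj]
      exact ((continuous_apply j).comp (continuous_apply i).snd).min
        (continuous_const.sub ((continuous_apply j).comp (continuous_apply i).snd))
  · by_cases hii : i = i'
    · simp only [if_pos hii]; exact continuous_const
    · simp only [if_neg hii]
      exact Continuous.dist (continuous_apply i) (continuous_apply i')

/-- points of a small scaled cube around a configuration point stay `eps`-close to it -/
lemma dist_aff_lt {Rr : ι → Set (Fin q)} {c : ι → Pt p q} (hc : c ∈ ConfSet p q ι Rr)
    {i : ι} {sx : Fin p → ℝ} {sx' : Fin q → ℝ}
    (hsx : ∀ k, 0 < sx k) (hsx' : ∀ j, 0 < sx' j)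
    (hlex : ∀ k, sx k ≤ eps Rr c) (hlex' : ∀ j, sx' j ≤ eps Rr c)
    {x : Pt p q} (hx : x ∈ cube p q (Rr i)) :
    dist (aff sx sx' (c i) x) (c i) < eps Rr c := by
  have hep := eps_pos hc
  rw [Prod.dist_eq]
  apply max_lt <;> rw [dist_pi_lt_iff hep] <;> intro b
  · show dist (sx b * x.1 b + (c i).1 b) ((c i).1 b) < eps Rr c
    rw [Real.dist_eq, add_sub_cancel_right, abs_mul, abs_of_pos (hsx b)]
    calc sx b * |x.1 b| < sx b * 1 := (mul_lt_mul_iff_right₀ (hsx b)).2 ((cube_abs_lt hx).1 b)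
      _ ≤ eps Rr c := by rw [mul_one]; exact hlex b
  · show dist (sx' b * x.2 b + (c i).2 b) ((c i).2 b) < eps Rr c
    rw [Real.dist_eq, add_sub_cancel_right, abs_mul, abs_of_pos (hsx' b)]
    calc sx' b * |x.2 b| < sx' b * 1 := (mul_lt_mul_iff_right₀ (hsx' b)).2 ((cube_abs_lt hx).2 b)
      _ ≤ eps Rr c := by rw [mul_one]; exact hlex' b

/-- small scaled cubes around distinct configuration points are disjoint -/
lemma disj_of_le_eps {Rr : ι → Set (Fin q)} {c : ι → Pt p q} (hc : c ∈ ConfSet p q ι Rr)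
    {s : ι → Fin p → ℝ} {s' : ι → Fin q → ℝ}
    (hs : ∀ i k, 0 < s i k) (hs' : ∀ i j, 0 < s' i j)
    (hle : ∀ i k, s i k ≤ eps Rr c) (hle' : ∀ i j, s' i j ≤ eps Rr c) :
    ∀ i i' x y, x ∈ cube p q (Rr i) → y ∈ cube p q (Rr i') →
      aff (s i) (s' i) (c i) x = aff (s i') (s' i') (c i') y → i = i' := by
  intro i i' x y hx hy heq
  by_contra hne
  have d1 := dist_aff_lt hc (hs i) (hs' i) (hle i) (hle' i) hx
  have d2 := dist_aff_lt hc (hs i') (hs' i') (hle i') (hle' i') hy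
  rw [heq] at d1
  have htri : dist (c i) (c i') < 2 * eps Rr c := by
    calc dist (c i) (c i') ≤ dist (c i) (aff (s i') (s' i') (c i') y)
        + dist (aff (s i') (s' i') (c i') y) (c i') := dist_triangle _ _ _
      _ < eps Rr c + eps Rr c := add_lt_add (by rwa [dist_comm]) d2
      _ = 2 * eps Rr c := by ring
  have hphi := two_eps_le_phi hc (Sum.inr (Sum.inr (i, i')))
  simp only [phi, if_neg hne] at hphi
  linarith

/-- membership criterion for `RectSpace` in terms of the affine-map data -/
lemma mem_rect {Rr : ι → Set (Fin q)} {c : ι → Pt p q} (hc : c ∈ ConfSet p q ι Rr)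
    {s : ι → Fin p → ℝ} {s' : ι → Fin q → ℝ}
    (hs : ∀ i k, 0 < s i k) (hs' : ∀ i j, 0 < s' i j)
    (h1 : ∀ i k, s i k ≤ 1 - |(c i).1 k|)
    (h2 : ∀ i j, j ∈ Rr i → s' i j ≤ 1)
    (h3 : ∀ i j, j ∉ Rr i → s' i j ≤ (c i).2 j ∧ s' i j + (c i).2 j ≤ 1)
    (hdisj : ∀ i i' x y, x ∈ cube p q (Rr i) → y ∈ cube p q (Rr i') →
      aff (s i) (s' i) (c i) x = aff (s i') (s' i') (c i') y → i = i') :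
    (∀ i, OpenRectEmb p q (aff (s i) (s' i) (c i)) (Rr i) Set.univ) ∧
      ∀ (i i' : ι) (x y : Pt p q), x ∈ cube p q (Rr i) → y ∈ cube p q (Rr i') →
        aff (s i) (s' i) (c i) x = aff (s i') (s' i') (c i') y → i = i' ∧ x = y := by
  constructor
  · intro i
    exact openRectEmb_aff (Rr i) (hs i) (hs' i) (hc.1 i).1 (hc.1 i).2
      (h1 i) (h2 i) (h3 i)
  · intro i i' x y hx hy heq
    obtain rfl : i = i' := hdisj i i' x y hx hy heq
    exact ⟨rfl, aff_inj (hs i) (hs' i) heq⟩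

/-- linear interpolation of scales: from `av` at `t = 0` through `min av e` at `t = 1/2`
to `e` at `t = 1` -/
noncomputable def sig (t av e : ℝ) : ℝ :=
  min av e + max 0 (1 - 2 * t) * (av - min av e) + max 0 (2 * t - 1) * (e - min av e)

lemma sig_zero (av e : ℝ) : sig 0 av e = av := by
  unfold sig
  rw [show max (0:ℝ) (1 - 2*0) = 1 by norm_num, show max (0:ℝ) (2*0-1) = 0 by norm_num]
  ring

lemma sig_one (av e : ℝ) : sig 1 av e = e := by
  unfold sig
  rw [show max (0:ℝ) (1 - 2*1) = 0 by norm_num, show max (0:ℝ) (2*1-1) = 1 by norm_num]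
  ring

lemma sig_pos {t av e : ℝ} (ha : 0 < av) (he : 0 < e) : 0 < sig t av e := by
  unfold sig
  have h1 : 0 ≤ max 0 (1 - 2*t) * (av - min av e) :=
    mul_nonneg (le_max_left _ _) (by simp [min_le_left])
  have h2 : 0 ≤ max 0 (2*t - 1) * (e - min av e) :=
    mul_nonneg (le_max_left _ _) (by simp [min_le_right])
  have : 0 < min av e := lt_min ha he
  linarith

lemma sig_le_left {t av e : ℝ} (h0 : 0 ≤ t) (ht : t ≤ 1/2) : sig t av e ≤ av := by
  unfold sig
  rw [max_eq_left (by linarith : 2*t - 1 ≤ 0), max_eq_right (by linarith : (0:ℝ) ≤ 1 - 2*t)]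
  have hm : min av e ≤ av := min_le_left _ _
  nlinarith

lemma sig_le_right {t av e : ℝ} (ht : 1/2 ≤ t) (h1 : t ≤ 1) : sig t av e ≤ e := by
  unfold sig
  rw [max_eq_left (by linarith : 1 - 2*t ≤ 0), max_eq_right (by linarith : (0:ℝ) ≤ 2*t - 1)]
  have hm : min av e ≤ e := min_le_right _ _
  nlinarith

lemma sig_le {t av e B : ℝ} (h0 : 0 ≤ t) (h1 : t ≤ 1) (hav : av ≤ B) (he : e ≤ B) :
    sig t av e ≤ B := by
  rcases le_total t (1/2) with h | h
  · exact (sig_le_left h0 h).trans hav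
  · exact (sig_le_right h h1).trans he

lemma Continuous.sig' {X : Type*} [TopologicalSpace X] {f g h : X → ℝ}
    (hf : Continuous f) (hg : Continuous g) (hh : Continuous h) :
    Continuous fun x => sig (f x) (g x) (h x) := by
  unfold sig
  fun_prop

/-- shrinking the dilation factors shrinks the image of a cube -/
lemma aff_scale_le_mem {s a : Fin p → ℝ} {s' cc : Fin q → ℝ} {z : Pt p q}
    (hs : ∀ k, 0 < s k) (ha : ∀ k, 0 < a k) (hs' : ∀ j, 0 < s' j) (hcc : ∀ j, 0 < cc j)
    (hle : ∀ k, s k ≤ a k) (hle' : ∀ j, s' j ≤ cc j) {Q : Set (Fin q)} {x : Pt p q}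
    (hx : x ∈ cube p q Q) :
    ∃ x' ∈ cube p q Q, aff a cc z x' = aff s s' z x := by
  refine ⟨(fun k => s k * x.1 k / a k, fun j => s' j * x.2 j / cc j), ?_, ?_⟩
  · refine ⟨fun k => ?_, fun j => ⟨fun hj => ?_, fun hj => ?_⟩⟩
    · have : |s k * x.1 k / a k| < 1 := by
        rw [abs_div, abs_of_pos (ha k), div_lt_one (ha k), abs_mul, abs_of_pos (hs k)]
        calc s k * |x.1 k| < s k * 1 :=
              (mul_lt_mul_iff_right₀ (hs k)).2 ((cube_abs_lt hx).1 k)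
          _ ≤ a k := by rw [mul_one]; exact hle k
      exact abs_lt.1 this
    · have hxj := (hx.2 j).1 hj
      constructor
      · exact div_nonneg (mul_nonneg (hs' j).le hxj.1) (hcc j).le
      · rw [div_lt_one (hcc j)]
        calc s' j * x.2 j < s' j * 1 := (mul_lt_mul_iff_right₀ (hs' j)).2 hxj.2
          _ ≤ cc j := by rw [mul_one]; exact hle' j
    · have : |s' j * x.2 j / cc j| < 1 := by
        rw [abs_div, abs_of_pos (hcc j), div_lt_one (hcc j), abs_mul, abs_of_pos (hs' j)]
        calc s' j * |x.2 j| < s' j * 1 :=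
              (mul_lt_mul_iff_right₀ (hs' j)).2 ((cube_abs_lt hx).2 j)
          _ ≤ cc j := by rw [mul_one]; exact hle' j
      exact abs_lt.1 this
  · refine Prod.ext (funext fun k => ?_) (funext fun j => ?_)
    · show a k * (s k * x.1 k / a k) + z.1 k = s k * x.1 k + z.1 k
      rw [mul_comm (a k), div_mul_cancel₀ _ (ha k).ne']
    · show cc j * (s' j * x.2 j / cc j) + z.2 j = s' j * x.2 j + z.2 j
      rw [mul_comm (cc j), div_mul_cancel₀ _ (hcc j).ne']

/-- underlying maps of the section of `ev₀` -/
noncomputable def secRaw {Rr : ι → Set (Fin q)} (c : ConfSet p q ι Rr) :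
    ι → C(Pt p q, Pt p q) :=
  fun i => ⟨aff (fun _ => eps Rr c.1) (fun _ => eps Rr c.1) (c.1 i), continuous_aff _ _ _⟩

lemma sec_mem {Rr : ι → Set (Fin q)} (c : ConfSet p q ι Rr) :
    (∀ i, OpenRectEmb p q (secRaw c i) (Rr i) Set.univ) ∧
      ∀ (i i' : ι) (x y : Pt p q), x ∈ cube p q (Rr i) → y ∈ cube p q (Rr i') →
        secRaw c i x = secRaw c i' y → i = i' ∧ x = y := by
  have hc := c.2
  have hep := eps_pos hc
  exact mem_rect hc (fun i k => hep) (fun i j => hep)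
    (fun i k => by simpa [phi] using eps_le_phi hc (Sum.inl (i, k)))
    (fun i j _ => eps_le_one hc)
    (fun i j hj => by
      have h := eps_le_phi hc (Sum.inr (Sum.inl (i, j)))
      simp only [phi, if_neg hj, le_min_iff] at h
      exact ⟨h.1, by linarith [h.2]⟩)
    (disj_of_le_eps hc (fun i k => hep) (fun i j => hep)
      (fun i k => le_refl _) (fun i j => le_refl _))

/-- the section of `ev₀` -/
noncomputable def secF {Rr : ι → Set (Fin q)} (c : ConfSet p q ι Rr) :
    RectSpace p q ι Rr := ⟨secRaw c, sec_mem c⟩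

/-- the scales used along the homotopy -/
noncomputable def sA {Rr : ι → Set (Fin q)} (t : ℝ) (f : RectSpace p q ι Rr) (i : ι) :
    Fin p → ℝ := fun k => sig t (Af f i k) (eps Rr (cfg f))

noncomputable def sC {Rr : ι → Set (Fin q)} (t : ℝ) (f : RectSpace p q ι Rr) (i : ι) :
    Fin q → ℝ := fun j => sig t (Cf f i j) (eps Rr (cfg f))

lemma hom_mem {Rr : ι → Set (Fin q)} {t : ℝ} (h0 : 0 ≤ t) (h1 : t ≤ 1)
    (f : RectSpace p q ι Rr) :
    (∀ i, OpenRectEmb p q (aff (sA t f i) (sC t f i) (cfg f i)) (Rr i) Set.univ) ∧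
      ∀ (i i' : ι) (x y : Pt p q), x ∈ cube p q (Rr i) → y ∈ cube p q (Rr i') →
        aff (sA t f i) (sC t f i) (cfg f i) x = aff (sA t f i') (sC t f i') (cfg f i') y →
        i = i' ∧ x = y := by
  have hc := cfg_mem f
  have hAp : ∀ i k, 0 < Af f i k := fun i => (params f i).1
  have hCp : ∀ i j, 0 < Cf f i j := fun i => (params f i).2.1
  have hep := eps_pos hc
  have hsA : ∀ i k, 0 < sA t f i k := fun i k => sig_pos (hAp i k) hep
  have hsC : ∀ i j, 0 < sC t f i j := fun i j => sig_pos (hCp i j) hep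
  refine mem_rect hc hsA hsC ?_ ?_ ?_ ?_
  · intro i k
    exact sig_le h0 h1 ((param_bounds f i).2.2.1 k)
      (by simpa [phi] using eps_le_phi hc (Sum.inl (i, k)))
  · intro i j hj
    exact sig_le h0 h1 ((param_bounds f i).2.2.2.1 j hj) (eps_le_one hc)
  · intro i j hj
    have h := eps_le_phi hc (Sum.inr (Sum.inl (i, j)))
    simp only [phi, if_neg hj, le_min_iff] at h
    have hb := (param_bounds f i).2.2.2.2 j hj
    constructor
    · exact sig_le h0 h1 hb.1 h.1
    · have : sC t f i j ≤ 1 - (cfg f i).2 j :=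
        sig_le h0 h1 (by linarith [hb.2]) (by linarith [h.2])
      linarith
  · intro i i' x y hx hy heq
    rcases le_total t (1/2) with h | h
    · have hleA : ∀ i₀ k, sA t f i₀ k ≤ Af f i₀ k := fun i₀ k => sig_le_left h0 h
      have hleC : ∀ i₀ j, sC t f i₀ j ≤ Cf f i₀ j := fun i₀ j => sig_le_left h0 h
      obtain ⟨x', hx', hxeq⟩ := aff_scale_le_mem (hsA i) (hAp i) (hsC i) (hCp i)
        (hleA i) (hleC i) hx
      obtain ⟨y', hy', hyeq⟩ := aff_scale_le_mem (hsA i') (hAp i') (hsC i') (hCp i')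
        (hleA i') (hleC i') hy
      refine (f.2.2 i i' x' y' hx' hy' ?_).1
      rw [(params f i).2.2 x', (params f i').2.2 y', hxeq, hyeq, heq]
    · have hleA : ∀ i₀ k, sA t f i₀ k ≤ eps Rr (cfg f) := fun i₀ k => sig_le_right h h1
      have hleC : ∀ i₀ j, sC t f i₀ j ≤ eps Rr (cfg f) := fun i₀ j => sig_le_right h h1
      exact disj_of_le_eps hc hsA hsC hleA hleC i i' x y hx hy heq

/-- the homotopy, as a self-map of `RectSpace` for each time `t ∈ [0,1]` -/
noncomputable def Hfun {Rr : ι → Set (Fin q)} (t : ℝ) (h0 : 0 ≤ t) (h1 : t ≤ 1)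
    (f : RectSpace p q ι Rr) : RectSpace p q ι Rr :=
  ⟨fun i => ⟨aff (sA t f i) (sC t f i) (cfg f i), continuous_aff _ _ _⟩, hom_mem h0 h1 f⟩

lemma sA_zero {Rr : ι → Set (Fin q)} (f : RectSpace p q ι Rr) (i : ι) :
    sA 0 f i = Af f i := funext fun k => sig_zero _ _

lemma sC_zero {Rr : ι → Set (Fin q)} (f : RectSpace p q ι Rr) (i : ι) :
    sC 0 f i = Cf f i := funext fun j => sig_zero _ _

lemma sA_one {Rr : ι → Set (Fin q)} (f : RectSpace p q ι Rr) (i : ι) :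
    sA 1 f i = fun _ => eps Rr (cfg f) := funext fun k => sig_one _ _

lemma sC_one {Rr : ι → Set (Fin q)} (f : RectSpace p q ι Rr) (i : ι) :
    sC 1 f i = fun _ => eps Rr (cfg f) := funext fun j => sig_one _ _

lemma Hfun_zero {Rr : ι → Set (Fin q)} (h0 : (0:ℝ) ≤ 0) (h1 : (0:ℝ) ≤ 1)
    (f : RectSpace p q ι Rr) : Hfun 0 h0 h1 f = f := by
  refine Subtype.ext (funext fun i => ContinuousMap.ext fun x => ?_)
  show aff (sA 0 f i) (sC 0 f i) (cfg f i) x = f.1 i x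
  rw [sA_zero, sC_zero]
  exact ((params f i).2.2 x).symm

lemma Hfun_one {Rr : ι → Set (Fin q)} (h0 : (0:ℝ) ≤ 1) (h1 : (1:ℝ) ≤ 1)
    (f : RectSpace p q ι Rr) : Hfun 1 h0 h1 f = secF ⟨cfg f, cfg_mem f⟩ := by
  refine Subtype.ext (funext fun i => ContinuousMap.ext fun x => ?_)
  show aff (sA 1 f i) (sC 1 f i) (cfg f i) x = secRaw _ i x
  rw [sA_one, sC_one]
  rfl

/- continuity lemmas -/

lemma continuous_val_apply {Rr : ι → Set (Fin q)} (i : ι) :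
    Continuous fun f : RectSpace p q ι Rr => f.1 i :=
  (continuous_apply i).comp continuous_subtype_val

lemma continuous_eval_pt {Rr : ι → Set (Fin q)} (i : ι) (x₀ : Pt p q) :
    Continuous fun f : RectSpace p q ι Rr => f.1 i x₀ :=
  (continuous_eval_const x₀).comp (continuous_val_apply i)

lemma continuous_Af {Rr : ι → Set (Fin q)} (i : ι) (k : Fin p) :
    Continuous fun f : RectSpace p q ι Rr => Af f i k :=
  ((continuous_apply k).comp (continuous_eval_pt i onep).fst).sub
    ((continuous_apply k).comp (continuous_eval_pt i 0).fst)

lemma continuous_Cf {Rr : ι → Set (Fin q)} (i : ι) (j : Fin q) :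
    Continuous fun f : RectSpace p q ι Rr => Cf f i j :=
  ((continuous_apply j).comp (continuous_eval_pt i onep).snd).sub
    ((continuous_apply j).comp (continuous_eval_pt i 0).snd)

lemma continuous_cfg {Rr : ι → Set (Fin q)} :
    Continuous fun f : RectSpace p q ι Rr => cfg f := by
  unfold cfg
  exact continuous_pi fun i => continuous_eval_pt i 0

lemma continuous_epsf {Rr : ι → Set (Fin q)} :
    Continuous fun f : RectSpace p q ι Rr => eps Rr (cfg f) :=
  (continuous_eps Rr).comp continuous_cfg

lemma continuous_Hraw {Rr : ι → Set (Fin q)} (i : ι) :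
    Continuous fun tf : ℝ × RectSpace p q ι Rr =>
      (⟨aff (sA tf.1 tf.2 i) (sC tf.1 tf.2 i) (cfg tf.2 i), continuous_aff _ _ _⟩ :
        C(Pt p q, Pt p q)) := by
  refine ContinuousMap.continuous_of_continuous_uncurry _ ?_
  have hT : Continuous fun u : (ℝ × RectSpace p q ι Rr) × Pt p q => u.1.1 :=
    continuous_fst.fst
  have hF : Continuous fun u : (ℝ × RectSpace p q ι Rr) × Pt p q => u.1.2 :=
    continuous_fst.snd
  have hX : Continuous fun u : (ℝ × RectSpace p q ι Rr) × Pt p q => u.2 := continuous_snd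
  show Continuous fun u : (ℝ × RectSpace p q ι Rr) × Pt p q =>
    aff (sA u.1.1 u.1.2 i) (sC u.1.1 u.1.2 i) (cfg u.1.2 i) u.2
  unfold aff sA sC
  refine Continuous.prodMk ?_ ?_
  · refine continuous_pi fun k => Continuous.add (Continuous.mul ?_ ?_) ?_
    · exact Continuous.sig' hT ((continuous_Af i k).comp hF) (continuous_epsf.comp hF)
    · exact (continuous_apply k).comp hX.fst
    · exact (continuous_apply k).comp (((continuous_eval_pt i 0).comp hF).fst)
  · refine continuous_pi fun j => Continuous.add (Continuous.mul ?_ ?_) ?_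
    · exact Continuous.sig' hT ((continuous_Cf i j).comp hF) (continuous_epsf.comp hF)
    · exact (continuous_apply j).comp hX.snd
    · exact (continuous_apply j).comp (((continuous_eval_pt i 0).comp hF).snd)

lemma continuous_secRaw {Rr : ι → Set (Fin q)} (i : ι) :
    Continuous fun c : ConfSet p q ι Rr => secRaw c i := by
  refine ContinuousMap.continuous_of_continuous_uncurry _ ?_
  have hC : Continuous fun u : ConfSet p q ι Rr × Pt p q => u.1.1 :=
    continuous_subtype_val.comp continuous_fst
  have hX : Continuous fun u : ConfSet p q ι Rr × Pt p q => u.2 := continuous_snd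
  show Continuous fun u : ConfSet p q ι Rr × Pt p q =>
    aff (fun _ => eps Rr u.1.1) (fun _ => eps Rr u.1.1) (u.1.1 i) u.2
  unfold aff
  refine Continuous.prodMk ?_ ?_
  · refine continuous_pi fun k => Continuous.add (Continuous.mul ?_ ?_) ?_
    · exact (continuous_eps Rr).comp hC
    · exact (continuous_apply k).comp hX.fst
    · exact (continuous_apply k).comp ((continuous_apply i).comp hC).fst
  · refine continuous_pi fun j => Continuous.add (Continuous.mul ?_ ?_) ?_
    · exact (continuous_eps Rr).comp hC
    · exact (continuous_apply j).comp hX.snd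
    · exact (continuous_apply j).comp ((continuous_apply i).comp hC).snd

lemma continuous_secF {Rr : ι → Set (Fin q)} :
    Continuous fun c : ConfSet p q ι Rr => secF c :=
  Continuous.subtype_mk (continuous_pi fun i => continuous_secRaw i) _

/-- the evaluation-at-centers map -/
noncomputable def evCM {Rr : ι → Set (Fin q)} : C(RectSpace p q ι Rr, ConfSet p q ι Rr) :=
  ⟨fun f => ⟨cfg f, cfg_mem f⟩, Continuous.subtype_mk continuous_cfg _⟩

/-- the section of the evaluation-at-centers map -/
noncomputable def secCM {Rr : ι → Set (Fin q)} : C(ConfSet p q ι Rr, RectSpace p q ι Rr) :=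
  ⟨secF, continuous_secF⟩

/-- the homotopy from the identity to `secCM ∘ evCM` -/
noncomputable def bigH {Rr : ι → Set (Fin q)} :
    ContinuousMap.Homotopy (ContinuousMap.id (RectSpace p q ι Rr)) (secCM.comp evCM) where
  toFun := fun tf => Hfun (tf.1 : ℝ) tf.1.2.1 tf.1.2.2 tf.2
  continuous_toFun := by
    apply Continuous.subtype_mk
    refine continuous_pi fun i => ?_
    exact (continuous_Hraw i).comp
      ((continuous_subtype_val.comp continuous_fst).prodMk continuous_snd)
  map_zero_left := fun f => Hfun_zero (le_refl 0) zero_le_one f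
  map_one_left := fun f => Hfun_one zero_le_one (le_refl 1) f

end EvAux

open EvAux in
/-- The evaluation-at-centers map `ev₀ : Rect(⊔_i □^{p,R_i}, □^{p,q}) → Conf_R(□^{p,q})`
is well defined and continuous, admits a continuous section `s` with `ev₀ ∘ s = id` and
`s ∘ ev₀` homotopic to the identity; in particular `ev₀` is a homotopy equivalence. -/
theorem evaluation_at_centers_homotopy_equivalence (p q : ℕ) (ι : Type) [Fintype ι]
    (R : ι → Set (Fin q)) :
    ∃ hmem : ∀ f : RectSpace p q ι R, (fun i => f.1 i 0) ∈ ConfSet p q ι R,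
    ∃ hev : Continuous fun f : RectSpace p q ι R =>
        (⟨fun i => f.1 i 0, hmem f⟩ : ConfSet p q ι R),
    ∃ s : C(ConfSet p q ι R, RectSpace p q ι R),
      (∀ c : ConfSet p q ι R,
        (⟨fun i => (s c).1 i 0, hmem (s c)⟩ : ConfSet p q ι R) = c) ∧
      (s.comp ⟨fun f => ⟨fun i => f.1 i 0, hmem f⟩, hev⟩).Homotopic
        (ContinuousMap.id (RectSpace p q ι R)) ∧
      Nonempty (ContinuousMap.HomotopyEquiv (RectSpace p q ι R) (ConfSet p q ι R)) := by
  refine ⟨fun f => cfg_mem f, Continuous.subtype_mk continuous_cfg _, secCM, ?_, ?_, ?_⟩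
  · intro c
    exact Subtype.ext (funext fun i => aff_zero _ _ _)
  · exact ⟨bigH.symm⟩
  · refine ⟨⟨evCM, secCM, ⟨bigH.symm⟩, ?_⟩⟩
    have h : (evCM (p := p) (Rr := R)).comp secCM = ContinuousMap.id _ :=
      ContinuousMap.ext fun c => Subtype.ext (funext fun i => aff_zero _ _ _)
    rw [h]
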